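/- Let Erfc(s) = 2·∫_s^∞ (1/√π) e^{-x²} dx and N_t(a) = (1/√(πt)) exp(−a²/t). Then for all a > 0, ∫_0^∞ Erfc(1/√t) · N_t(a) · t^{-1} dt = (2/π) · arctan(a)/a. -/

import Mathlib

open Real MeasureTheory

/-- The Gaussian kernel `N_t(x) = (π t)^{-1/2} exp(-x²/t)`. -/
noncomputable def gaussN (t x : ℝ) : ℝ := (Real.sqrt (Real.pi * t))⁻¹ * Real.exp (-(x ^ 2) / t)

/-- The complementary error function `Erfc(s) = 2 ∫_s^∞ π^{-1/2} e^{-x²} dx`. -/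
noncomputable def Erfc (s : ℝ) : ℝ :=
  2 * ∫ x in Set.Ioi s, (Real.sqrt Real.pi)⁻¹ * Real.exp (-(x ^ 2))

open Set Filter

private lemma aux_hasDerivAt {c : ℝ} (hc : 0 < c) {t : ℝ} (ht : 0 < t) :
    HasDerivAt (fun s : ℝ => if s ≤ 0 then (0 : ℝ) else c⁻¹ * Real.exp (-c / s))
      (t⁻¹ ^ 2 * Real.exp (-c * t⁻¹)) t := by
  have hd : HasDerivAt (fun s : ℝ => -c / s) (c / t ^ 2) t := by
    have h := (hasDerivAt_inv ht.ne').const_mul (-c)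
    have : -c * -(t ^ 2)⁻¹ = c / t ^ 2 := by field_simp
    simpa [div_eq_mul_inv, this] using h
  have h1 : HasDerivAt (fun s : ℝ => c⁻¹ * Real.exp (-c / s))
      (t⁻¹ ^ 2 * Real.exp (-c * t⁻¹)) t := by
    have h := ((Real.hasDerivAt_exp (-c / t)).comp t hd).const_mul c⁻¹
    have hval : c⁻¹ * (Real.exp (-c / t) * (c / t ^ 2)) = t⁻¹ ^ 2 * Real.exp (-c * t⁻¹) := by
      rw [show -c * t⁻¹ = -c / t by ring]
      field_simp
    simpa [hval] using h
  apply h1.congr_of_eventuallyEq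
  filter_upwards [lt_mem_nhds ht] with s hs
  rw [if_neg (not_le.mpr hs)]

private lemma aux_exp_integral {c : ℝ} (hc : 0 < c) :
    IntegrableOn (fun t : ℝ => t⁻¹ ^ 2 * Real.exp (-c * t⁻¹)) (Ioi 0) ∧
      ∫ t in Ioi 0, t⁻¹ ^ 2 * Real.exp (-c * t⁻¹) = c⁻¹ := by
  set g : ℝ → ℝ := fun s => if s ≤ 0 then (0 : ℝ) else c⁻¹ * Real.exp (-c / s) with hg
  have hcont : ContinuousWithinAt g (Ici 0) 0 := by
    rw [← Set.Ioi_insert, continuousWithinAt_insert_self]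
    have h0 : g 0 = 0 := by simp [hg]
    rw [ContinuousWithinAt, h0]
    have htend : Tendsto (fun s : ℝ => c⁻¹ * Real.exp (-(c * s⁻¹))) (nhdsWithin 0 (Ioi 0))
        (nhds 0) := by
      have h1 : Tendsto (fun s : ℝ => c * s⁻¹) (nhdsWithin 0 (Ioi 0)) atTop :=
        tendsto_inv_nhdsGT_zero.const_mul_atTop hc
      have h2 : Tendsto (fun s : ℝ => -(c * s⁻¹)) (nhdsWithin 0 (Ioi 0)) atBot :=
        tendsto_neg_atTop_atBot.comp h1
      have h3 := Real.tendsto_exp_atBot.comp h2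
      simpa using h3.const_mul c⁻¹
    apply htend.congr'
    filter_upwards [self_mem_nhdsWithin] with s hs
    rw [hg]
    simp only [if_neg (not_le.mpr (mem_Ioi.mp hs))]
    rw [show -(c * s⁻¹) = -c / s by ring]
  have hderiv : ∀ t ∈ Ioi (0 : ℝ), HasDerivAt g (t⁻¹ ^ 2 * Real.exp (-c * t⁻¹)) t :=
    fun t ht => aux_hasDerivAt hc ht
  have hpos : ∀ t ∈ Ioi (0 : ℝ), 0 ≤ t⁻¹ ^ 2 * Real.exp (-c * t⁻¹) := fun t _ => by positivity
  have htop : Tendsto g atTop (nhds c⁻¹) := by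
    have htend : Tendsto (fun s : ℝ => c⁻¹ * Real.exp (-c * s⁻¹)) atTop (nhds c⁻¹) := by
      have h1 : Tendsto (fun s : ℝ => -c * s⁻¹) atTop (nhds 0) := by
        simpa using tendsto_inv_atTop_zero.const_mul (-c)
      have h2 := (Real.continuous_exp.tendsto 0).comp h1
      simpa using h2.const_mul c⁻¹
    apply htend.congr'
    filter_upwards [eventually_gt_atTop (0 : ℝ)] with s hs
    rw [hg]
    simp only [if_neg (not_le.mpr hs)]
    rw [show -c * s⁻¹ = -c / s by ring]
  have h0 : g 0 = 0 := by simp [hg]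
  refine ⟨integrableOn_Ioi_deriv_of_nonneg hcont hderiv hpos htop, ?_⟩
  rw [integral_Ioi_of_hasDerivAt_of_nonneg hcont hderiv hpos htop, h0, sub_zero]

private lemma aux_arctan_integral {a : ℝ} (ha : 0 < a) :
    IntegrableOn (fun u : ℝ => (u ^ 2 + a ^ 2)⁻¹) (Ioi 1) ∧
      ∫ u in Ioi 1, (u ^ 2 + a ^ 2)⁻¹ = Real.arctan a / a := by
  set G : ℝ → ℝ := fun u => a⁻¹ * Real.arctan (u * a⁻¹) with hG
  have hderiv : ∀ u ∈ Ici (1 : ℝ), HasDerivAt G ((u ^ 2 + a ^ 2)⁻¹) u := by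
    intro u _
    have h2 := ((Real.hasDerivAt_arctan (u * a⁻¹)).comp u
      ((hasDerivAt_id u).mul_const a⁻¹)).const_mul a⁻¹
    have hval : a⁻¹ * (1 / (1 + (u * a⁻¹) ^ 2) * (1 * a⁻¹)) = (u ^ 2 + a ^ 2)⁻¹ := by
      field_simp
      ring
    rw [hG, ← hval]
    exact h2
  have hpos : ∀ u ∈ Ioi (1 : ℝ), 0 ≤ (u ^ 2 + a ^ 2)⁻¹ := fun u _ => by positivity
  have htop : Tendsto G atTop (nhds (a⁻¹ * (Real.pi / 2))) := by
    have h1 : Tendsto (fun u : ℝ => u * a⁻¹) atTop atTop :=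
      Tendsto.atTop_mul_const (inv_pos.mpr ha) tendsto_id
    have h2 : Tendsto (fun u : ℝ => Real.arctan (u * a⁻¹)) atTop (nhds (Real.pi / 2)) :=
      (Real.tendsto_arctan_atTop.mono_right nhdsWithin_le_nhds).comp h1
    exact h2.const_mul a⁻¹
  refine ⟨integrableOn_Ioi_deriv_of_nonneg' hderiv hpos htop, ?_⟩
  rw [integral_Ioi_of_hasDerivAt_of_nonneg' hderiv hpos htop, hG]
  simp only [one_mul]
  rw [Real.arctan_inv_of_pos ha]
  field_simp
  ring

private lemma aux_gauss_integrableOn {t : ℝ} (ht : 0 < t) :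
    IntegrableOn (fun u : ℝ => Real.exp (-(u ^ 2) * t⁻¹)) (Ioi 1) := by
  have h := (integrable_exp_neg_mul_sq (inv_pos.mpr ht)).integrableOn (s := Ioi 1)
  have hfun : (fun u : ℝ => Real.exp (-(u ^ 2) * t⁻¹)) = fun u => Real.exp (-t⁻¹ * u ^ 2) := by
    funext u; congr 1; ring
  rw [hfun]; exact h

private lemma aux_F_eq (a t u : ℝ) :
    2 / Real.pi * (t⁻¹ ^ 2 * Real.exp (-(u ^ 2 + a ^ 2) * t⁻¹))
      = (2 / Real.pi * t⁻¹ ^ 2 * Real.exp (-(a ^ 2) * t⁻¹)) * Real.exp (-(u ^ 2) * t⁻¹) := by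
  have h : -(u ^ 2 + a ^ 2) * t⁻¹ = -(a ^ 2) * t⁻¹ + -(u ^ 2) * t⁻¹ := by ring
  rw [h, Real.exp_add]; ring

private lemma aux_pointwise (a : ℝ) {t : ℝ} (ht : 0 < t) :
    Erfc (1 / Real.sqrt t) * gaussN t a * t⁻¹
      = ∫ u in Ioi 1, 2 / Real.pi * (t⁻¹ ^ 2 * Real.exp (-(u ^ 2 + a ^ 2) * t⁻¹)) := by
  have hst : 0 < Real.sqrt t := Real.sqrt_pos.mpr ht
  have hs2 : ((Real.sqrt t)⁻¹) ^ 2 = t⁻¹ := by rw [inv_pow, Real.sq_sqrt ht.le]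
  have key := integral_comp_mul_left_Ioi
    (fun x => (Real.sqrt Real.pi)⁻¹ * Real.exp (-(x ^ 2))) 1 (inv_pos.mpr hst)
  rw [mul_one, inv_inv] at key
  -- key : ∫ x in Ioi 1, f ((√t)⁻¹ * x) = √t • ∫ x in Ioi (√t)⁻¹, f x
  have hErfc : Erfc (1 / Real.sqrt t)
      = 2 * ((Real.sqrt t)⁻¹ * ((Real.sqrt Real.pi)⁻¹ *
          ∫ u in Ioi 1, Real.exp (-(u ^ 2) * t⁻¹))) := by
    rw [Erfc, one_div]
    have hIoi : (∫ x in Ioi (Real.sqrt t)⁻¹, (Real.sqrt Real.pi)⁻¹ * Real.exp (-(x ^ 2)))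
        = (Real.sqrt t)⁻¹ * ∫ x in Ioi 1,
            (Real.sqrt Real.pi)⁻¹ * Real.exp (-(((Real.sqrt t)⁻¹ * x) ^ 2)) := by
      rw [key, smul_eq_mul, ← mul_assoc, inv_mul_cancel₀ hst.ne', one_mul]
    rw [hIoi]
    have harg : ∀ u : ℝ, -(((Real.sqrt t)⁻¹ * u) ^ 2) = -(u ^ 2) * t⁻¹ := by
      intro u; rw [mul_pow, hs2]; ring
    congr 2
    rw [← integral_const_mul]
    apply setIntegral_congr_fun measurableSet_Ioi
    intro u _
    show (Real.sqrt Real.pi)⁻¹ * Real.exp (-(((Real.sqrt t)⁻¹ * u) ^ 2))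
      = (Real.sqrt Real.pi)⁻¹ * Real.exp (-(u ^ 2) * t⁻¹)
    rw [harg u]
  rw [hErfc, gaussN]
  rw [show -(a ^ 2) / t = -(a ^ 2) * t⁻¹ by rw [div_eq_mul_inv]]
  have hrhs : (∫ u in Ioi 1, 2 / Real.pi * (t⁻¹ ^ 2 * Real.exp (-(u ^ 2 + a ^ 2) * t⁻¹)))
      = (2 / Real.pi * t⁻¹ ^ 2 * Real.exp (-(a ^ 2) * t⁻¹))
        * ∫ u in Ioi 1, Real.exp (-(u ^ 2) * t⁻¹) := by
    rw [← integral_const_mul]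
    apply setIntegral_congr_fun measurableSet_Ioi
    intro u _
    exact aux_F_eq a t u
  rw [hrhs]
  have hsqrt : Real.sqrt (Real.pi * t) = Real.sqrt Real.pi * Real.sqrt t :=
    Real.sqrt_mul Real.pi_pos.le t
  rw [hsqrt]
  have hπ : Real.sqrt Real.pi * Real.sqrt Real.pi = Real.pi :=
    Real.mul_self_sqrt Real.pi_pos.le
  have hts : Real.sqrt t * Real.sqrt t = t := Real.mul_self_sqrt ht.le
  have h1 : (Real.sqrt Real.pi)⁻¹ * (Real.sqrt Real.pi)⁻¹ = Real.pi⁻¹ := by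
    rw [← mul_inv, hπ]
  have h2 : (Real.sqrt t)⁻¹ * (Real.sqrt t)⁻¹ = t⁻¹ := by
    rw [← mul_inv, hts]
  linear_combination (2 * (∫ u in Ioi 1, Real.exp (-(u ^ 2) * t⁻¹))
      * Real.exp (-(a ^ 2) * t⁻¹) * t⁻¹ * ((Real.sqrt t)⁻¹ * (Real.sqrt t)⁻¹)) * h1
    + (2 * (∫ u in Ioi 1, Real.exp (-(u ^ 2) * t⁻¹))
      * Real.exp (-(a ^ 2) * t⁻¹) * t⁻¹ * Real.pi⁻¹) * h2

/-- The integral identity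
`∫_0^∞ Erfc(1/√t) N_t(a) t⁻¹ dt = (2/π) arctan(a)/a` for `a > 0`. -/
theorem erfc_gauss_integral (a : ℝ) (ha : 0 < a) :
    (∫ t in Set.Ioi (0 : ℝ), Erfc (1 / Real.sqrt t) * gaussN t a * t⁻¹)
      = (2 / Real.pi) * Real.arctan a / a := by
  set F : ℝ → ℝ → ℝ := fun t u => 2 / Real.pi * (t⁻¹ ^ 2 * Real.exp (-(u ^ 2 + a ^ 2) * t⁻¹))
    with hF
  have hFnonneg : ∀ t u, 0 ≤ F t u := fun t u => by rw [hF]; positivity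
  have hFmeas : Measurable (Function.uncurry F) := by
    apply Measurable.const_mul
    exact ((measurable_fst.inv.pow_const 2).mul
      ((((measurable_snd.pow_const 2).add_const (a ^ 2)).neg.mul measurable_fst.inv).exp))
  have hFintU : ∀ t : ℝ, 0 < t → IntegrableOn (fun u => F t u) (Ioi 1) := by
    intro t ht
    have h := ((aux_gauss_integrableOn ht).const_mul
      (2 / Real.pi * t⁻¹ ^ 2 * Real.exp (-(a ^ 2) * t⁻¹)))
    exact IntegrableOn.congr_fun h (fun u _ => (aux_F_eq a t u).symm) measurableSet_Ioi
  have hc : ∀ u : ℝ, 0 < u ^ 2 + a ^ 2 := fun u => by positivity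
  have hFintT : ∀ u : ℝ, IntegrableOn (fun t => F t u) (Ioi 0) := fun u =>
    (aux_exp_integral (hc u)).1.const_mul (2 / Real.pi)
  have hFintTval : ∀ u : ℝ, (∫ t in Ioi 0, F t u) = 2 / Real.pi * (u ^ 2 + a ^ 2)⁻¹ := by
    intro u
    simp only [hF]
    rw [integral_const_mul, (aux_exp_integral (hc u)).2]
  calc
    (∫ t in Set.Ioi (0 : ℝ), Erfc (1 / Real.sqrt t) * gaussN t a * t⁻¹)
        = ∫ t in Ioi 0, (∫ u in Ioi 1, F t u) := by
          apply setIntegral_congr_fun measurableSet_Ioi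
          intro t ht
          exact aux_pointwise a ht
    _ = (∫⁻ t in Ioi 0, ENNReal.ofReal (∫ u in Ioi 1, F t u)).toReal := by
          rw [integral_eq_lintegral_of_nonneg_ae]
          · exact Eventually.of_forall fun t => integral_nonneg fun u => hFnonneg t u
          · exact (hFmeas.stronglyMeasurable.integral_prod_right').aestronglyMeasurable
    _ = (∫⁻ t in Ioi 0, ∫⁻ u in Ioi 1, ENNReal.ofReal (F t u)).toReal := by
          congr 1
          apply setLIntegral_congr_fun measurableSet_Ioi
          intro t ht
          dsimp only
          rw [ofReal_integral_eq_lintegral_ofReal (hFintU t ht)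
            (Eventually.of_forall fun u => hFnonneg t u)]
    _ = (∫⁻ u in Ioi 1, ∫⁻ t in Ioi 0, ENNReal.ofReal (F t u)).toReal := by
          rw [lintegral_lintegral_swap]
          exact (hFmeas.ennreal_ofReal).aemeasurable
    _ = (∫⁻ u in Ioi 1, ENNReal.ofReal (2 / Real.pi * (u ^ 2 + a ^ 2)⁻¹)).toReal := by
          congr 1
          apply setLIntegral_congr_fun measurableSet_Ioi
          intro u hu
          dsimp only
          rw [← ofReal_integral_eq_lintegral_ofReal (hFintT u)
            (Eventually.of_forall fun t => hFnonneg t u), hFintTval u]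
    _ = (2 / Real.pi) * Real.arctan a / a := by
          rw [← ofReal_integral_eq_lintegral_ofReal
            ((aux_arctan_integral ha).1.const_mul (2 / Real.pi))
            (Eventually.of_forall fun u => by positivity),
            integral_const_mul, (aux_arctan_integral ha).2,
            ENNReal.toReal_ofReal (mul_nonneg (by positivity)
              (div_nonneg (by simpa using (Real.arctan_strictMono ha).le.trans_eq' Real.arctan_zero) ha.le))]
          ring
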